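/- Let $(z(s),\theta(s))$ be a maximal solution of $z' = \sin\theta$, $\theta' = -\frac{2}{z^2}(\sin\theta + z\cos\theta)$ with $z > 0$, and suppose $z(s) \to 0$ and $\theta(s) \to \theta_*$ as $s \to s_*$. Then either $\theta_* = 0$ and $s_* = +\infty$, or $\theta_* = \pi$ and $s_* = -\infty$ (modulo $2\pi$ in $\theta$). -/

import Mathlib

open Set Filter

/-- `(z, θ)` solves `z' = sin θ`, `θ' = -(2/z²)(sin θ + z cos θ)` with `z > 0` on `D`. -/
def SysSolOn (D : Set ℝ) (z θ : ℝ → ℝ) : Prop :=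
  (∀ s ∈ D, 0 < z s) ∧
  (∀ s ∈ D, HasDerivAt z (Real.sin (θ s)) s) ∧
  (∀ s ∈ D, HasDerivAt θ
    (-(2 / (z s) ^ 2) * (Real.sin (θ s) + z s * Real.cos (θ s))) s)

/-- The open interval of `ℝ` with (possibly infinite) endpoints `s1 s2 : EReal`. -/
def edom (s1 s2 : EReal) : Set ℝ := {s : ℝ | s1 < (s : EReal) ∧ (s : EReal) < s2}

/-- The filter of real numbers approaching the right endpoint `s2 : EReal` from the left
(equal to `atTop` when `s2 = ⊤`). -/
noncomputable def endFilterRight (s2 : EReal) : Filter ℝ :=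
  Filter.comap (fun x : ℝ => (x : EReal)) (nhdsWithin s2 (Iio s2))

/-- The filter of real numbers approaching the left endpoint `s1 : EReal` from the right
(equal to `atBot` when `s1 = ⊥`). -/
noncomputable def endFilterLeft (s1 : EReal) : Filter ℝ :=
  Filter.comap (fun x : ℝ => (x : EReal)) (nhdsWithin s1 (Ioi s1))


open Real
section Aux

lemma monoOnAux {f f' : ℝ → ℝ} {T : Set ℝ} (hT : Convex ℝ T)
    (hd : ∀ s ∈ T, HasDerivAt f (f' s) s) (h0 : ∀ s ∈ T, 0 ≤ f' s) : MonotoneOn f T := by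
  apply monotoneOn_of_deriv_nonneg hT
  · exact fun s hs => (hd s hs).continuousAt.continuousWithinAt
  · exact fun s hs => ((hd s (interior_subset hs)).differentiableAt).differentiableWithinAt
  · intro s hs
    rw [(hd s (interior_subset hs)).deriv]
    exact h0 s (interior_subset hs)

lemma barrierAux {f f' : ℝ → ℝ} {a b : ℝ}
    (hd : ∀ s ∈ Icc a b, HasDerivAt f (f' s) s)
    (h0 : f a ≤ 0)
    (hbar : ∀ s ∈ Icc a b, f s = 0 → f' s < 0) :
    ∀ s ∈ Icc a b, f s ≤ 0 := by
  by_contra hcon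
  push_neg at hcon
  obtain ⟨t, ht, hft⟩ := hcon
  have hcont : ContinuousOn f (Icc a b) :=
    fun s hs => (hd s hs).continuousAt.continuousWithinAt
  have hsub : Icc a t ⊆ Icc a b := Icc_subset_Icc le_rfl ht.2
  have hScl : IsClosed (Icc a t ∩ f ⁻¹' (Iic 0)) :=
    (hcont.mono hsub).preimage_isClosed_of_isClosed isClosed_Icc isClosed_Iic
  have hSne : (Icc a t ∩ f ⁻¹' (Iic 0)).Nonempty := ⟨a, ⟨le_refl a, ht.1⟩, h0⟩
  have hSbdd : BddAbove (Icc a t ∩ f ⁻¹' (Iic 0)) := ⟨t, fun s hs => hs.1.2⟩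
  have huS : sSup (Icc a t ∩ f ⁻¹' (Iic 0)) ∈ Icc a t ∩ f ⁻¹' (Iic 0) :=
    hScl.csSup_mem hSne hSbdd
  obtain ⟨⟨hau, hut⟩, hfu⟩ := huS
  have hfu : f (sSup (Icc a t ∩ f ⁻¹' (Iic 0))) ≤ 0 := hfu
  generalize hu : sSup (Icc a t ∩ f ⁻¹' (Iic 0)) = u at *
  have hult : u < t := by
    rcases eq_or_lt_of_le hut with h | h
    · exact absurd (h ▸ hfu) (not_le.2 hft)
    · exact h
  have hub : u ∈ Icc a b := hsub ⟨hau, hut⟩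
  have hpos : ∀ s, u < s → s ≤ t → 0 < f s := by
    intro s hus hst
    by_contra hns
    push_neg at hns
    have hmem : s ∈ Icc a t ∩ f ⁻¹' (Iic 0) := ⟨⟨hau.trans hus.le, hst⟩, hns⟩
    have := le_csSup hSbdd hmem
    rw [hu] at this
    exact absurd this (not_le.2 hus)
  have hfu0 : f u = 0 := by
    rcases lt_or_eq_of_le hfu with h | h
    · exfalso
      have hcu : ContinuousAt f u := (hd u hub).continuousAt
      have h1 : ∀ᶠ s in nhds u, f s < 0 := hcu.eventually_lt_const h
      have h2 : ∀ᶠ s in nhdsWithin u (Ioi u), f s < 0 := eventually_nhdsWithin_of_eventually_nhds h1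
      have h3 : ∀ᶠ s in nhdsWithin u (Ioi u), s < t := eventually_nhdsWithin_of_eventually_nhds
        (tendsto_id.eventually_lt_const hult)
      obtain ⟨s, ⟨hs1, hs2⟩, hs3⟩ := ((h2.and h3).and self_mem_nhdsWithin).exists
      exact absurd (hpos s hs3 hs2.le) (not_lt.2 hs1.le)
    · exact h
  have hder : f' u < 0 := hbar u hub hfu0
  have hslope := hasDerivAt_iff_tendsto_slope.1 (hd u hub)
  have hslope' : Tendsto (slope f u) (nhdsWithin u (Ioi u)) (nhds (f' u)) :=
    hslope.mono_left (nhdsWithin_mono u (fun s hs => ne_of_gt hs))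
  have h1 : ∀ᶠ s in nhdsWithin u (Ioi u), slope f u s < 0 :=
    hslope'.eventually_lt_const hder
  have h3 : ∀ᶠ s in nhdsWithin u (Ioi u), s < t := eventually_nhdsWithin_of_eventually_nhds
    (tendsto_id.eventually_lt_const hult)
  obtain ⟨s, ⟨hs1, hs2⟩, hs3⟩ := ((h1.and h3).and self_mem_nhdsWithin).exists
  have hsu : (0:ℝ) < s - u := sub_pos.2 hs3
  have : f s - f u < 0 := by
    have := hs1
    rw [slope_def_field] at this
    have h4 : (f s - f u) / (s - u) < 0 := by
      simpa [div_eq_iff, hsu.ne'] using this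
    nlinarith [mul_pos hsu (neg_pos.2 h4), div_mul_cancel₀ (f s - f u) hsu.ne']
  rw [hfu0] at this
  exact absurd (hpos s hs3 hs2.le) (not_lt.2 (by linarith))


lemma efr_top : endFilterRight ⊤ = atTop := by
  have h1 : (Iio (⊤ : EReal)) = {(⊤ : EReal)}ᶜ := by
    ext x; simp [lt_top_iff_ne_top]
  rw [endFilterRight, h1, EReal.nhdsWithin_top,
    Filter.comap_map (fun a b => by exact_mod_cast id)]

lemma efr_coe (B : ℝ) : endFilterRight (B : ℝ) = nhdsWithin B (Iio B) := by
  rw [endFilterRight, nhdsWithin, nhdsWithin, Filter.comap_inf, EReal.nhds_coe,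
    Filter.comap_map (fun a b => by exact_mod_cast id), Filter.comap_principal]
  congr 1
  congr 1
  ext x
  simp [EReal.coe_lt_coe_iff]

lemma efl_neg (s1 : EReal) : endFilterLeft s1 = Filter.map Neg.neg (endFilterRight (-s1)) := by
  have hnegE : Continuous (fun x : EReal => -x) := continuous_neg
  have hhomE : (Homeomorph.mk ⟨(fun x : EReal => -x), (fun x : EReal => -x), neg_neg, neg_neg⟩
      hnegE hnegE : EReal ≃ₜ EReal) = _ := rfl
  rw [endFilterRight, endFilterLeft,
    Filter.map_eq_comap_of_inverse (m := (Neg.neg : ℝ → ℝ)) (n := (Neg.neg : ℝ → ℝ))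
      (funext neg_neg) (funext neg_neg), Filter.comap_comap]
  have hfun : ((fun x : ℝ => (x : EReal)) ∘ (Neg.neg : ℝ → ℝ))
      = (fun x : EReal => -x) ∘ (fun x : ℝ => (x : EReal)) := by
    funext x; simp [EReal.coe_neg]
  rw [hfun, ← Filter.comap_comap]
  congr 1
  rw [nhdsWithin, nhdsWithin, Filter.comap_inf, Filter.comap_principal]
  have hc : Filter.comap (fun x : EReal => -x) (nhds (-s1)) = nhds s1 := by
    have := (Homeomorph.mk ⟨(fun x : EReal => -x), (fun x : EReal => -x), neg_neg, neg_neg⟩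
      hnegE hnegE).comap_nhds_eq (-s1)
    simpa using this
  rw [hc]
  congr 1
  congr 1
  ext x
  simp only [mem_preimage, mem_Iio, mem_Ioi]
  exact EReal.neg_lt_neg_iff.symm

-- P3: cos≈-1 monotonicity numerator
lemma polyB {Z S C : ℝ} (hV : S + Z*C ≤ 0) (hZ0 : 0 < Z) (hZ : Z < 1/10)
    (hC1 : -1 ≤ C) (hC : C < -1/2) (hS1 : -(1/10) < S) (hS2 : S < 1/10) :
    -2*(S + Z*C)*(C - Z*S) + Z^2*(S*C) ≤ 0 := by
  nlinarith [mul_nonneg (neg_nonneg.2 hV) (by linarith : (0:ℝ) ≤ -C),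
    mul_pos hZ0 hZ0, sq_nonneg (S + Z*C), sq_nonneg C,
    mul_nonneg (mul_nonneg hZ0.le hZ0.le) (sq_nonneg C),
    mul_le_of_le_one_left (neg_nonneg.2 hV) (by linarith : -C ≤ 1)]

-- P5: case iii barrier derivative, with V = Z or V = -Z
lemma polyE {Z S C V : ℝ} (hVdef : S = V - Z*C) (hV2 : V^2 = Z^2) (hZ0 : 0 < Z) (hZ : Z < 1/10)
    (hC1 : C ≤ 1) (hC : 1/2 < C) (hS1 : -(1/10) < S) (hS2 : S < 1/10) :
    -2*(C - Z*S) + V*(S*C) - Z*S < 0 := by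
  have hVabs : V = Z ∨ V = -Z := by
    have h := sub_eq_zero.2 hV2
    have : (V - Z) * (V + Z) = 0 := by ring_nf; nlinarith [hV2]
    rcases mul_eq_zero.1 this with h' | h'
    · left; linarith
    · right; linarith
  rcases hVabs with h | h <;> subst h <;> nlinarith

-- P4: case ii numerator
lemma polyC {Z S V : ℝ} (hV : V ≤ -Z) (hZ0 : 0 < Z) (hS : -1 ≤ S) :
    0 ≤ -2*V + 2*Z*S := by nlinarith

noncomputable def vvAux (z θ : ℝ → ℝ) (s : ℝ) : ℝ := Real.sin (θ s) + z s * Real.cos (θ s)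
noncomputable def tdAux (z θ : ℝ → ℝ) (s : ℝ) : ℝ := -(2 / (z s) ^ 2) * vvAux z θ s
noncomputable def vdAux (z θ : ℝ → ℝ) (s : ℝ) : ℝ :=
  tdAux z θ s * (Real.cos (θ s) - z s * Real.sin (θ s)) + Real.sin (θ s) * Real.cos (θ s)

structure Ctx (F : Filter ℝ) (D : Set ℝ) (z θ : ℝ → ℝ) (θstar : ℝ) : Prop where
  hne : F.NeBot
  hD : D ∈ F
  hconv : Convex ℝ D
  htails : ∀ S ∈ F, ∃ s₀ ∈ D, D ∩ Ici s₀ ⊆ S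
  htail : ∀ s₀ ∈ D, D ∩ Ici s₀ ∈ F
  hpos : ∀ s ∈ D, 0 < z s
  hdz : ∀ s ∈ D, HasDerivAt z (Real.sin (θ s)) s
  hdθ : ∀ s ∈ D, HasDerivAt θ (tdAux z θ s) s
  hz0 : Tendsto z F (nhds 0)
  hθs : Tendsto θ F (nhds θstar)

namespace Ctx

variable {F : Filter ℝ} {D : Set ℝ} {z θ : ℝ → ℝ} {θstar : ℝ} (c : Ctx F D z θ θstar)
include c

lemma hdvv : ∀ s ∈ D, HasDerivAt (vvAux z θ) (vdAux z θ s) s := by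
  intro s hs
  have h1 : HasDerivAt (fun t => Real.sin (θ t)) (Real.cos (θ s) * tdAux z θ s) s :=
    (Real.hasDerivAt_sin (θ s)).comp s (c.hdθ s hs)
  have h2 : HasDerivAt (fun t => Real.cos (θ t)) (-Real.sin (θ s) * tdAux z θ s) s :=
    (Real.hasDerivAt_cos (θ s)).comp s (c.hdθ s hs)
  have h3 : HasDerivAt (fun t => z t * Real.cos (θ t))
      (Real.sin (θ s) * Real.cos (θ s) + z s * (-Real.sin (θ s) * tdAux z θ s)) s :=
    (c.hdz s hs).mul h2
  have h4 := h1.add h3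
  refine h4.congr_deriv ?_
  unfold vdAux
  ring

lemma tail_of_eventually {P : ℝ → Prop} (h : ∀ᶠ s in F, P s) :
    ∃ s₀ ∈ D, ∀ s ∈ D ∩ Ici s₀, P s := by
  obtain ⟨s₀, hs₀, hsub⟩ := c.htails {s | P s} h
  exact ⟨s₀, hs₀, fun s hs => hsub hs⟩

lemma no_nonneg {s₀ : ℝ} (hs₀ : s₀ ∈ D)
    (h : ∀ s ∈ D ∩ Ici s₀, 0 ≤ Real.sin (θ s)) : False := by
  haveI := c.hne
  have hmono : MonotoneOn z (D ∩ Ici s₀) :=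
    monoOnAux (c.hconv.inter (convex_Ici s₀)) (fun s hs => c.hdz s hs.1) h
  have hev : ∀ᶠ s in F, z s₀ ≤ z s := by
    filter_upwards [c.htail s₀ hs₀] with s hs
    exact hmono ⟨hs₀, self_mem_Ici⟩ hs hs.2
  exact absurd (ge_of_tendsto c.hz0 hev) (not_le.2 (c.hpos s₀ hs₀))

lemma sin_ne_pos (h : 0 < Real.sin θstar) : False := by
  have hev : ∀ᶠ s in F, 0 ≤ Real.sin (θ s) :=
    ((Real.continuous_sin.tendsto _).comp c.hθs).eventually_const_lt h |>.mono fun s hs => hs.le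
  obtain ⟨s₀, hs₀, hP⟩ := c.tail_of_eventually hev
  exact c.no_nonneg hs₀ hP

end Ctx

namespace Ctx

variable {F : Filter ℝ} {D : Set ℝ} {z θ : ℝ → ℝ} {θstar : ℝ} (c : Ctx F D z θ θstar)
include c

lemma case_i {s₀ : ℝ} (hs₀ : s₀ ∈ D)
    (h : ∀ s ∈ D ∩ Ici s₀, z s ≤ vvAux z θ s) : False := by
  apply c.no_nonneg hs₀
  intro s hs
  have hv := h s hs
  have hz := c.hpos s hs.1
  have hc := Real.cos_le_one (θ s)
  unfold vvAux at hv
  nlinarith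

lemma case_ii {s₀ : ℝ} (hs₀ : s₀ ∈ D)
    (h : ∀ s ∈ D ∩ Ici s₀, vvAux z θ s ≤ -(z s)) : False := by
  haveI := c.hne
  have hconvT : Convex ℝ (D ∩ Ici s₀) := c.hconv.inter (convex_Ici s₀)
  have hdg : ∀ s ∈ D ∩ Ici s₀, HasDerivAt (fun t => θ t + 2 * Real.log (z t))
      (tdAux z θ s + 2 * ((z s)⁻¹ * Real.sin (θ s))) s := by
    intro s hs
    have hlog : HasDerivAt (fun t => Real.log (z t)) ((z s)⁻¹ * Real.sin (θ s)) s :=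
      (Real.hasDerivAt_log (c.hpos s hs.1).ne').comp s (c.hdz s hs.1)
    exact (c.hdθ s hs.1).add (hlog.const_mul 2)
  have hge : ∀ s ∈ D ∩ Ici s₀, 0 ≤ tdAux z θ s + 2 * ((z s)⁻¹ * Real.sin (θ s)) := by
    intro s hs
    have hz := c.hpos s hs.1
    have hv := h s hs
    have hsin : -1 ≤ Real.sin (θ s) := Real.neg_one_le_sin _
    have key : tdAux z θ s + 2 * ((z s)⁻¹ * Real.sin (θ s))
        = (-2 * vvAux z θ s + 2 * z s * Real.sin (θ s)) / (z s)^2 := by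
      unfold tdAux
      field_simp
    rw [key]
    apply div_nonneg _ (by positivity)
    nlinarith
  have hmono := monoOnAux hconvT hdg hge
  have hlb : ∀ s ∈ D ∩ Ici s₀,
      (θ s₀ + 2 * Real.log (z s₀)) - 2 * Real.log (z s) ≤ θ s := by
    intro s hs
    have := hmono ⟨hs₀, self_mem_Ici⟩ hs hs.2
    simp only at this
    linarith
  have hzpos : ∀ᶠ s in F, 0 < z s := by
    filter_upwards [c.hD] with s hs using c.hpos s hs
  have hz01 : Tendsto z F (nhdsWithin 0 (Ioi 0)) :=
    tendsto_nhdsWithin_iff.2 ⟨c.hz0, hzpos⟩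
  have hlog : Tendsto (fun s => Real.log (z s)) F atBot :=
    Real.tendsto_log_nhdsGT_zero.comp hz01
  have hblow : Tendsto (fun s => (θ s₀ + 2 * Real.log (z s₀)) - 2 * Real.log (z s)) F atTop := by
    have h2 : Tendsto (fun s => (-2 : ℝ) * Real.log (z s)) F atTop :=
      hlog.const_mul_atBot_of_neg (by norm_num)
    have := tendsto_atTop_add_const_left F (θ s₀ + 2 * Real.log (z s₀)) h2
    convert this using 2
    ring
  have h1 : ∀ᶠ s in F, θstar + 1 < (θ s₀ + 2 * Real.log (z s₀)) - 2 * Real.log (z s) :=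
    hblow.eventually_gt_atTop (θstar + 1)
  have h2 : ∀ᶠ s in F, θ s < θstar + 1 := c.hθs.eventually_lt_const (lt_add_one θstar)
  have hTev : ∀ᶠ s in F, s ∈ D ∩ Ici s₀ := c.htail s₀ hs₀
  obtain ⟨s, hsT, hb1, hb2⟩ := (hTev.and (h1.and h2)).exists
  exact absurd (hlb s hsT) (not_le.2 (by linarith))

lemma cos_neg_case (hsin0 : Real.sin θstar = 0) (hcos : Real.cos θstar = -1) : False := by
  haveI := c.hne
  have hsinθ : Tendsto (fun s => Real.sin (θ s)) F (nhds 0) := by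
    have := (Real.continuous_sin.tendsto θstar).comp c.hθs
    rwa [hsin0] at this
  have hcosθ : Tendsto (fun s => Real.cos (θ s)) F (nhds (-1)) := by
    have := (Real.continuous_cos.tendsto θstar).comp c.hθs
    rwa [hcos] at this
  have E1 : ∀ᶠ s in F, z s < 1/10 := c.hz0.eventually_lt_const (by norm_num)
  have E2 : ∀ᶠ s in F, |Real.sin (θ s)| < 1/10 := by
    have h : Tendsto (fun s => |Real.sin (θ s)|) F (nhds 0) := by
      simpa using hsinθ.abs
    exact h.eventually_lt_const (by norm_num)
  have E3 : ∀ᶠ s in F, Real.cos (θ s) < -(1/2) := hcosθ.eventually_lt_const (by norm_num)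
  obtain ⟨s₀, hs₀, hP⟩ := c.tail_of_eventually (E1.and (E2.and E3))
  by_cases hb : ∃ s₁ ∈ D ∩ Ici s₀, vvAux z θ s₁ < 0
  · obtain ⟨s₁, hs₁T, hv₁⟩ := hb
    have hs₁D := hs₁T.1
    have hsub1 : D ∩ Ici s₁ ⊆ D ∩ Ici s₀ := fun s hs => ⟨hs.1, mem_Ici.2 (le_trans hs₁T.2 hs.2)⟩
    have hbarr : ∀ t ∈ D ∩ Ici s₁, vvAux z θ t ≤ 0 := by
      intro t ht
      have hIcc : Icc s₁ t ⊆ D := c.hconv.ordConnected.out hs₁D ht.1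
      have hIccT : Icc s₁ t ⊆ D ∩ Ici s₀ := fun r hr => ⟨hIcc hr, le_trans hs₁T.2 hr.1⟩
      refine barrierAux (f' := vdAux z θ) (fun r hr => c.hdvv r (hIcc hr)) hv₁.le ?_ t
        ⟨ht.2, le_rfl⟩
      intro r hr hv0
      obtain ⟨h1, h2, h3⟩ := hP r (hIccT hr)
      have hz := c.hpos r (hIcc hr)
      have hsin : Real.sin (θ r) = -(z r * Real.cos (θ r)) := by
        unfold vvAux at hv0; linarith
      unfold vdAux tdAux
      rw [hv0, hsin]
      have hcc : (1/2 : ℝ) < -Real.cos (θ r) := by linarith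
      have h4 : (0:ℝ) < -Real.cos (θ r) := by linarith
      have h5 : (0:ℝ) < z r * Real.cos (θ r) ^ 2 := by nlinarith [mul_pos h4 h4]
      ring_nf
      nlinarith
    have hmono : MonotoneOn (fun s => -(vvAux z θ s)) (D ∩ Ici s₁) := by
      apply monoOnAux (c.hconv.inter (convex_Ici s₁)) (fun s hs => (c.hdvv s hs.1).neg)
      intro s hs
      obtain ⟨h1, h2, h3⟩ := hP s (hsub1 hs)
      have hz := c.hpos s hs.1
      have hv := hbarr s hs
      have habs := abs_lt.1 h2
      have key : vdAux z θ s
          = (-2*(Real.sin (θ s) + z s * Real.cos (θ s)) * (Real.cos (θ s) - z s * Real.sin (θ s))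
              + (z s)^2 * (Real.sin (θ s) * Real.cos (θ s))) / (z s)^2 := by
        unfold vdAux tdAux vvAux
        field_simp
      rw [neg_nonneg, key]
      have hvv : Real.sin (θ s) + z s * Real.cos (θ s) ≤ 0 := by unfold vvAux at hv; exact hv
      exact div_nonpos_of_nonpos_of_nonneg
        (polyB hvv hz h1 (Real.neg_one_le_cos _) (by linarith) habs.1 habs.2) (by positivity)
    haveI := c.hne
    have hev : ∀ᶠ s in F, -(vvAux z θ s₁) ≤ -(vvAux z θ s) := by
      have hTev1 : ∀ᶠ s in F, s ∈ D ∩ Ici s₁ := c.htail s₁ hs₁D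
      filter_upwards [hTev1] with s hs
      exact hmono ⟨hs₁D, self_mem_Ici⟩ hs hs.2
    have hvlim : Tendsto (fun s => -(vvAux z θ s)) F (nhds 0) := by
      have : Tendsto (vvAux z θ) F (nhds (0 + 0 * (-1))) :=
        hsinθ.add (c.hz0.mul hcosθ)
      simpa using this.neg
    have := ge_of_tendsto hvlim hev
    linarith
  · push_neg at hb
    apply c.no_nonneg hs₀
    intro s hs
    have hv := hb s hs
    obtain ⟨h1, h2, h3⟩ := hP s hs
    have hz := c.hpos s hs.1
    unfold vvAux at hv
    nlinarith

end Ctx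

namespace Ctx

variable {F : Filter ℝ} {D : Set ℝ} {z θ : ℝ → ℝ} {θstar : ℝ} (c : Ctx F D z θ θstar)
include c

lemma cos_one_case (M : ℝ) (hub : ∀ s ∈ D, s ≤ M)
    (hsin0 : Real.sin θstar = 0) (hcos1 : Real.cos θstar = 1) : False := by
  haveI := c.hne
  have hsinθ : Tendsto (fun s => Real.sin (θ s)) F (nhds 0) := by
    have := (Real.continuous_sin.tendsto θstar).comp c.hθs
    rwa [hsin0] at this
  have hcosθ : Tendsto (fun s => Real.cos (θ s)) F (nhds 1) := by
    have := (Real.continuous_cos.tendsto θstar).comp c.hθs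
    rwa [hcos1] at this
  have E1 : ∀ᶠ s in F, z s < 1/10 := c.hz0.eventually_lt_const (by norm_num)
  have E2 : ∀ᶠ s in F, |Real.sin (θ s)| < 1/10 := by
    have h : Tendsto (fun s => |Real.sin (θ s)|) F (nhds 0) := by simpa using hsinθ.abs
    exact h.eventually_lt_const (by norm_num)
  have E3 : ∀ᶠ s in F, 1/2 < Real.cos (θ s) := hcosθ.eventually_const_lt (by norm_num)
  obtain ⟨s₀, hs₀, hP⟩ := c.tail_of_eventually (E1.and (E2.and E3))
  by_cases hb : ∃ u ∈ D ∩ Ici s₀, |vvAux z θ u| < z u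
  · -- case (iii): trapped region, z decays at most exponentially, contradiction with D bounded
    obtain ⟨u, huT, hvu⟩ := hb
    have huD := huT.1
    have hsubu : D ∩ Ici u ⊆ D ∩ Ici s₀ := fun s hs => ⟨hs.1, mem_Ici.2 (le_trans huT.2 hs.2)⟩
    have hinv : ∀ t ∈ D ∩ Ici u, (vvAux z θ t)^2 ≤ (z t)^2 := by
      intro t ht
      have hIcc : Icc u t ⊆ D := c.hconv.ordConnected.out huD ht.1
      have hIccT : Icc u t ⊆ D ∩ Ici s₀ := fun r hr => ⟨hIcc hr, le_trans huT.2 hr.1⟩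
      have habsu := abs_lt.1 hvu
      have hd : ∀ r ∈ Icc u t, HasDerivAt (fun s => (vvAux z θ s)^2 - (z s)^2)
          (2 * vvAux z θ r * vdAux z θ r - 2 * z r * Real.sin (θ r)) r := by
        intro r hr
        have h1 := (c.hdvv r (hIcc hr)).pow 2
        have h2 := (c.hdz r (hIcc hr)).pow 2
        have := h1.sub h2
        refine this.congr_deriv ?_
        push_cast
        ring
      have hstart : (vvAux z θ u)^2 - (z u)^2 ≤ 0 := by nlinarith [habsu.1, habsu.2]
      have hbar : ∀ r ∈ Icc u t, (vvAux z θ r)^2 - (z r)^2 = 0 →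
          2 * vvAux z θ r * vdAux z θ r - 2 * z r * Real.sin (θ r) < 0 := by
        intro r hr h0
        obtain ⟨h1, h2, h3⟩ := hP r (hIccT hr)
        have hz := c.hpos r (hIcc hr)
        have habs := abs_lt.1 h2
        have hv2 : (vvAux z θ r)^2 = (z r)^2 := by linarith
        have hkey : vvAux z θ r * vdAux z θ r
            = -2*(Real.cos (θ r) - z r * Real.sin (θ r))
              + vvAux z θ r * (Real.sin (θ r) * Real.cos (θ r)) := by
          have expand : vvAux z θ r * vdAux z θ r
              = -(2 / (z r)^2) * (vvAux z θ r)^2 * (Real.cos (θ r) - z r * Real.sin (θ r))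
                + vvAux z θ r * (Real.sin (θ r) * Real.cos (θ r)) := by
            unfold vdAux tdAux
            ring
          rw [expand, hv2]
          field_simp
        have hSdef : Real.sin (θ r) = vvAux z θ r - z r * Real.cos (θ r) := by
          unfold vvAux; ring
        have := polyE hSdef hv2 hz h1 (Real.cos_le_one _) h3 habs.1 habs.2
        nlinarith [this]
      have := barrierAux hd hstart hbar t ⟨ht.2, le_rfl⟩
      linarith
    -- exponential lower bound for z on the tail
    have hq : MonotoneOn (fun s => z s * Real.exp (2*s)) (D ∩ Ici u) := by
      apply monoOnAux (c.hconv.inter (convex_Ici u))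
      · intro s hs
        have hde : HasDerivAt (fun s : ℝ => Real.exp (2*s)) (Real.exp (2*s) * 2) s := by
          have h2s : HasDerivAt (fun s : ℝ => 2*s) 2 s := by
            simpa using (hasDerivAt_id s).const_mul 2
          exact HasDerivAt.exp h2s
        exact (c.hdz s hs.1).mul hde
      · intro s hs
        have hz := c.hpos s hs.1
        have hvs := hinv s hs
        have hcle := Real.cos_le_one (θ s)
        have hvlb : -(z s) ≤ vvAux z θ s := by nlinarith
        have hslb : -(2 * z s) ≤ Real.sin (θ s) := by
          have : Real.sin (θ s) = vvAux z θ s - z s * Real.cos (θ s) := by unfold vvAux; ring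
          nlinarith
        have hexp : (0:ℝ) < Real.exp (2*s) := Real.exp_pos _
        nlinarith [mul_le_mul_of_nonneg_right hslb hexp.le]
    set δ := (z u * Real.exp (2*u)) / Real.exp (2*M) with hδdef
    have hδ : 0 < δ := by
      have := c.hpos u huD
      positivity
    have hzlb : ∀ s ∈ D ∩ Ici u, δ ≤ z s := by
      intro s hs
      have h1 : z u * Real.exp (2*u) ≤ z s * Real.exp (2*s) :=
        hq ⟨huD, self_mem_Ici⟩ hs hs.2
      have h2 : Real.exp (2*s) ≤ Real.exp (2*M) :=
        Real.exp_le_exp.2 (by linarith [hub s hs.1])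
      have hz := c.hpos s hs.1
      rw [hδdef, div_le_iff₀ (Real.exp_pos _)]
      calc z u * Real.exp (2*u) ≤ z s * Real.exp (2*s) := h1
        _ ≤ z s * Real.exp (2*M) := by nlinarith
    have hev : ∀ᶠ s in F, z s < δ := c.hz0.eventually_lt_const hδ
    have hTev : ∀ᶠ s in F, s ∈ D ∩ Ici u := c.htail u huD
    obtain ⟨s, hsT, hslt⟩ := (hTev.and hev).exists
    exact absurd (hzlb s hsT) (not_le.2 hslt)
  · push_neg at hb
    by_cases hneg : ∃ u ∈ D ∩ Ici s₀, vvAux z θ u < 0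
    · obtain ⟨u, huT, hvu⟩ := hneg
      refine c.case_ii huT.1 ?_
      intro s hs
      have hsT : s ∈ D ∩ Ici s₀ := ⟨hs.1, mem_Ici.2 (le_trans huT.2 hs.2)⟩
      have hzle := hb s hsT
      have hz := c.hpos s hs.1
      have hvneg : vvAux z θ s < 0 := by
        by_contra h'
        push_neg at h'
        have hus : u ≤ s := hs.2
        have hIcc : Icc u s ⊆ D := c.hconv.ordConnected.out huT.1 hs.1
        have hcont : ContinuousOn (vvAux z θ) (Icc u s) :=
          fun r hr => (c.hdvv r (hIcc hr)).continuousAt.continuousWithinAt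
        have h0mem : (0:ℝ) ∈ Icc (vvAux z θ u) (vvAux z θ s) := ⟨hvu.le, h'⟩
        obtain ⟨r, hr, hvr⟩ := intermediate_value_Icc hus hcont h0mem
        have hrT : r ∈ D ∩ Ici s₀ := ⟨hIcc hr, le_trans huT.2 hr.1⟩
        have := hb r hrT
        rw [hvr] at this
        simp at this
        exact absurd (c.hpos r (hIcc hr)) (not_lt.2 this)
      have habs : |vvAux z θ s| = -(vvAux z θ s) := abs_of_neg hvneg
      rw [habs] at hzle
      linarith
    · push_neg at hneg
      refine c.case_i hs₀ ?_
      intro s hs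
      have h1 := hb s hs
      have h2 := hneg s hs
      rwa [abs_of_nonneg h2] at h1

end Ctx

lemma sin_neg_fin {a B : ℝ} {z θ : ℝ → ℝ} {θstar : ℝ}
    (c : Ctx (nhdsWithin B (Iio B)) (Ioo a B) z θ θstar)
    (hsin : Real.sin θstar < 0) : False := by
  haveI := c.hne
  set F := nhdsWithin B (Iio B) with hF
  set cc := Real.sin θstar / 2 with hcc
  have hccneg : cc < 0 := by rw [hcc]; linarith
  have hsinθ : Tendsto (fun s => Real.sin (θ s)) F (nhds (Real.sin θstar)) :=
    (Real.continuous_sin.tendsto θstar).comp c.hθs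
  have E1 : ∀ᶠ s in F, Real.sin (θ s) < cc := hsinθ.eventually_lt_const (by rw [hcc]; linarith)
  have E2 : ∀ᶠ s in F, z s < -cc/2 := c.hz0.eventually_lt_const (by linarith)
  obtain ⟨s₀, hs₀, hP⟩ := c.tail_of_eventually (E1.and E2)
  have hzB : ∀ s ∈ Ioo a B ∩ Ici s₀, z s ≤ B - s := by
    intro s hs
    have hsD := hs.1
    have hmono : MonotoneOn (fun t => z t + t) (Ioo a B ∩ Ici s) := by
      apply monoOnAux (f' := fun t => Real.sin (θ t) + 1)
        ((convex_Ioo a B).inter (convex_Ici s))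
      · intro t ht
        exact (c.hdz t ht.1).add (hasDerivAt_id' t)
      · intro t ht
        have := Real.neg_one_le_sin (θ t)
        linarith
    have hev : ∀ᶠ t in F, z s + s ≤ z t + t := by
      have hTev : ∀ᶠ t in F, t ∈ Ioo a B ∩ Ici s := c.htail s hsD
      filter_upwards [hTev] with t ht
      exact hmono ⟨hsD, self_mem_Ici⟩ ht ht.2
    have hlim : Tendsto (fun t => z t + t) F (nhds (0 + B)) :=
      c.hz0.add (tendsto_id.mono_left nhdsWithin_le_nhds)
    have := ge_of_tendsto hlim hev
    linarith
  have hmono2 : MonotoneOn (fun t => θ t + cc * (B - t)⁻¹) (Ioo a B ∩ Ici s₀) := by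
    apply monoOnAux (f' := fun t => tdAux z θ t + cc * (1/(B - t)^2))
      ((convex_Ioo a B).inter (convex_Ici s₀))
    · intro t ht
      have hBt : B - t ≠ 0 := by
        have := ht.1.2
        intro h
        have := sub_eq_zero.1 h
        linarith
      have hsub : HasDerivAt (fun t : ℝ => B - t) (-1) t := by
        simpa using (hasDerivAt_id t).const_sub B
      have hder := (hsub.inv hBt).const_mul cc
      have := (c.hdθ t ht.1).add hder
      refine this.congr_deriv ?_
      ring
    · intro t ht
      obtain ⟨h1, h2⟩ := hP t ht
      have hz := c.hpos t ht.1
      have hzBt := hzB t ht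
      have hBt : 0 < B - t := sub_pos.2 ht.1.2
      have hvle : vvAux z θ t ≤ cc/2 := by
        have hcos := Real.cos_le_one (θ t)
        unfold vvAux
        nlinarith
      have h4 : -cc/(z t)^2 ≤ tdAux z θ t := by
        have key : tdAux z θ t - (-cc/(z t)^2) = (-2 * vvAux z θ t + cc)/(z t)^2 := by
          unfold tdAux
          field_simp
          ring
        have h5 : 0 ≤ (-2 * vvAux z θ t + cc)/(z t)^2 :=
          div_nonneg (by linarith) (by positivity)
        linarith
      have h3 : -cc / (B - t)^2 ≤ -cc / (z t)^2 :=
        div_le_div_of_nonneg_left (by linarith) (by positivity) (by nlinarith)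
      have heq : cc * (1/(B - t)^2) = -(-cc/(B - t)^2) := by ring
      rw [heq]
      linarith
  have hlb : ∀ t ∈ Ioo a B ∩ Ici s₀, (θ s₀ + cc * (B - s₀)⁻¹) - cc * (B - t)⁻¹ ≤ θ t := by
    intro t ht
    have := hmono2 ⟨hs₀, self_mem_Ici⟩ ht ht.2
    linarith
  have h1 : Tendsto (fun t : ℝ => B - t) F (nhdsWithin 0 (Ioi 0)) := by
    rw [tendsto_nhdsWithin_iff]
    constructor
    · have h0 : Tendsto (fun t : ℝ => B - t) (nhds B) (nhds (B - B)) :=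
        tendsto_const_nhds.sub tendsto_id
      have := h0.mono_left (nhdsWithin_le_nhds (s := Iio B))
      simpa using this
    · filter_upwards [self_mem_nhdsWithin] with t ht using sub_pos.2 (mem_Iio.1 ht)
  have h2 : Tendsto (fun t : ℝ => (B - t)⁻¹) F atTop := tendsto_inv_nhdsGT_zero.comp h1
  have hblow : Tendsto (fun t => (θ s₀ + cc * (B - s₀)⁻¹) + (-cc) * (B - t)⁻¹) F atTop :=
    tendsto_atTop_add_const_left F _ (h2.const_mul_atTop (by linarith))
  have hθb : ∀ᶠ t in F, θ t < θstar + 1 := c.hθs.eventually_lt_const (lt_add_one θstar)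
  have hbig : ∀ᶠ t in F, θstar + 1 < (θ s₀ + cc * (B - s₀)⁻¹) + (-cc) * (B - t)⁻¹ :=
    hblow.eventually_gt_atTop (θstar + 1)
  have hTev : ∀ᶠ t in F, t ∈ Ioo a B ∩ Ici s₀ := c.htail s₀ hs₀
  obtain ⟨t, htT, hb1, hb2⟩ := (hTev.and (hbig.and hθb)).exists
  have heq2 : (-cc) * (B - t)⁻¹ = -(cc * (B - t)⁻¹) := by ring
  have := hlb t htT
  rw [heq2] at hb1
  linarith

lemma mk_top {a : ℝ} {z θ : ℝ → ℝ} {θstar : ℝ}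
    (hpos : ∀ s ∈ Ioi a, 0 < z s)
    (hdz : ∀ s ∈ Ioi a, HasDerivAt z (Real.sin (θ s)) s)
    (hdθ : ∀ s ∈ Ioi a, HasDerivAt θ (tdAux z θ s) s)
    (hz0 : Tendsto z atTop (nhds 0)) (hθs : Tendsto θ atTop (nhds θstar)) :
    Ctx atTop (Ioi a) z θ θstar := by
  refine ⟨atTop_neBot, Ioi_mem_atTop a, convex_Ioi a, ?_, ?_, hpos, hdz, hdθ, hz0, hθs⟩
  · intro S hS
    obtain ⟨t, ht⟩ := mem_atTop_sets.1 hS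
    refine ⟨max (a+1) t, lt_of_lt_of_le (lt_add_one a) (le_max_left _ _), ?_⟩
    intro s hs
    exact ht s (le_trans (le_max_right _ _) hs.2)
  · intro s₀ hs₀
    rw [mem_atTop_sets]
    exact ⟨s₀, fun s hs => ⟨lt_of_lt_of_le hs₀ hs, hs⟩⟩

lemma mk_fin {a B : ℝ} (hab : a < B) {z θ : ℝ → ℝ} {θstar : ℝ}
    (hpos : ∀ s ∈ Ioo a B, 0 < z s)
    (hdz : ∀ s ∈ Ioo a B, HasDerivAt z (Real.sin (θ s)) s)
    (hdθ : ∀ s ∈ Ioo a B, HasDerivAt θ (tdAux z θ s) s)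
    (hz0 : Tendsto z (nhdsWithin B (Iio B)) (nhds 0))
    (hθs : Tendsto θ (nhdsWithin B (Iio B)) (nhds θstar)) :
    Ctx (nhdsWithin B (Iio B)) (Ioo a B) z θ θstar := by
  refine ⟨inferInstance, Ioo_mem_nhdsLT_of_mem ⟨hab, le_rfl⟩, convex_Ioo a B, ?_, ?_,
    hpos, hdz, hdθ, hz0, hθs⟩
  · intro S hS
    obtain ⟨c', hc'B, hsub⟩ := (nhdsLT_basis_of_exists_lt ⟨a, hab⟩).mem_iff.1 hS
    set s₀ := (max a c' + B)/2 with hs₀def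
    have hmax : max a c' < B := max_lt hab hc'B
    have h1 : max a c' < s₀ := by rw [hs₀def]; linarith
    have h2 : s₀ < B := by rw [hs₀def]; linarith
    refine ⟨s₀, ⟨lt_of_le_of_lt (le_max_left _ _) h1, h2⟩, ?_⟩
    intro s hs
    exact hsub ⟨lt_of_le_of_lt (le_max_right _ _) (lt_of_lt_of_le h1 hs.2), hs.1.2⟩
  · intro s₀ hs₀
    refine mem_of_superset (Ico_mem_nhdsLT_of_mem ⟨hs₀.2, le_rfl⟩) ?_
    intro s hs
    exact ⟨⟨lt_of_lt_of_le hs₀.1 hs.1, hs.2⟩, hs.1⟩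

lemma core_fin {a B : ℝ} {z θ : ℝ → ℝ} {θstar : ℝ}
    (c : Ctx (nhdsWithin B (Iio B)) (Ioo a B) z θ θstar) : False := by
  rcases lt_trichotomy (Real.sin θstar) 0 with h | h | h
  · exact sin_neg_fin c h
  · obtain ⟨n, hn⟩ := Real.sin_eq_zero_iff.1 h
    rcases Int.even_or_odd n with ⟨m, hm⟩ | ⟨m, hm⟩
    · have hcos : Real.cos θstar = 1 := by
        rw [← hn, hm]
        push_cast
        rw [show ((m:ℝ) + m) * π = 0 + (m:ℝ) * (2 * π) by ring]
        rw [show ((m:ℝ) * (2 * π)) = ((m:ℤ):ℝ) * (2*π) by push_cast; ring]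
        rw [Real.cos_add_int_mul_two_pi]
        exact Real.cos_zero
      exact c.cos_one_case B (fun s hs => hs.2.le) h hcos
    · have hcos : Real.cos θstar = -1 := by
        rw [← hn, hm]
        push_cast
        rw [show ((2*(m:ℝ)) + 1) * π = π + (m:ℝ) * (2 * π) by ring]
        rw [show ((m:ℝ) * (2 * π)) = ((m:ℤ):ℝ) * (2*π) by push_cast; ring]
        rw [Real.cos_add_int_mul_two_pi]
        exact Real.cos_pi
      exact c.cos_neg_case h hcos
  · exact c.sin_ne_pos h

lemma core_top {a : ℝ} {z θ : ℝ → ℝ} {θstar : ℝ}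
    (c : Ctx atTop (Ioi a) z θ θstar) : ∃ k : ℤ, θstar = 2 * (k:ℝ) * Real.pi := by
  rcases lt_trichotomy (Real.sin θstar) 0 with h | h | h
  · exfalso
    set cc := Real.sin θstar / 2 with hcc
    have hccneg : cc < 0 := by rw [hcc]; linarith
    have hsinθ : Tendsto (fun s => Real.sin (θ s)) atTop (nhds (Real.sin θstar)) :=
      (Real.continuous_sin.tendsto θstar).comp c.hθs
    have E1 : ∀ᶠ s in atTop, Real.sin (θ s) < cc :=
      hsinθ.eventually_lt_const (by rw [hcc]; linarith)
    obtain ⟨s₀, hs₀, hP⟩ := c.tail_of_eventually E1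
    have hmono : MonotoneOn (fun t => cc * t - z t) (Ioi a ∩ Ici s₀) := by
      apply monoOnAux (f' := fun t => cc - Real.sin (θ t)) ((convex_Ioi a).inter (convex_Ici s₀))
      · intro t ht
        have h1 : HasDerivAt (fun t : ℝ => cc * t) cc t := by
          simpa using (hasDerivAt_id t).const_mul cc
        exact h1.sub (c.hdz t ht.1)
      · intro t ht
        have := hP t ht
        linarith
    set s := s₀ + (z s₀ + 1)/(-cc) with hsdef
    have hzpos := c.hpos s₀ hs₀
    have hss : s₀ ≤ s := by
      rw [hsdef]
      have : 0 < (z s₀ + 1)/(-cc) := div_pos (by linarith) (by linarith)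
      linarith
    have hsT : s ∈ Ioi a ∩ Ici s₀ := ⟨lt_of_lt_of_le hs₀ hss, hss⟩
    have := hmono ⟨hs₀, self_mem_Ici⟩ hsT hss
    simp only at this
    have hkey : cc * (s - s₀) = -(z s₀ + 1) := by
      rw [hsdef]
      have hne : -cc ≠ 0 := by linarith
      have hne' : cc ≠ 0 := ne_of_lt hccneg
      field_simp
      ring
    have hzs := c.hpos s hsT.1
    nlinarith
  · obtain ⟨n, hn⟩ := Real.sin_eq_zero_iff.1 h
    rcases Int.even_or_odd n with ⟨m, hm⟩ | ⟨m, hm⟩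
    · refine ⟨m, ?_⟩
      rw [← hn, hm]
      push_cast
      ring
    · exfalso
      have hcos : Real.cos θstar = -1 := by
        rw [← hn, hm]
        push_cast
        rw [show ((2*(m:ℝ)) + 1) * π = π + (m:ℝ) * (2 * π) by ring]
        rw [show ((m:ℝ) * (2 * π)) = ((m:ℤ):ℝ) * (2*π) by push_cast; ring]
        rw [Real.cos_add_int_mul_two_pi]
        exact Real.cos_pi
      exact c.cos_neg_case h hcos
  · exact absurd (c.sin_ne_pos h) not_false

lemma rightCase (s1 s2 : EReal) (hlt : s1 < s2) (z θ : ℝ → ℝ)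
    (hsol : SysSolOn (edom s1 s2) z θ) (θstar : ℝ)
    (hz : Tendsto z (endFilterRight s2) (nhds 0))
    (hθ : Tendsto θ (endFilterRight s2) (nhds θstar)) :
    s2 = ⊤ ∧ ∃ k : ℤ, θstar = 2 * (k:ℝ) * Real.pi := by
  obtain ⟨hpos, hdz, hdθ⟩ := hsol
  have h3 : s2 = ⊥ ∨ s2 = ⊤ ∨ ∃ B : ℝ, s2 = B := by
    induction s2 using EReal.rec with
    | bot => exact Or.inl rfl
    | top => exact Or.inr (Or.inl rfl)
    | coe B => exact Or.inr (Or.inr ⟨B, rfl⟩)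
  rcases h3 with rfl | rfl | ⟨B, rfl⟩
  · exact absurd hlt (not_lt_bot)
  · refine ⟨rfl, ?_⟩
    rw [efr_top] at hz hθ
    obtain ⟨a, ha⟩ : ∃ a : ℝ, Ioi a ⊆ edom s1 ⊤ := by
      have h4 : s1 = ⊥ ∨ s1 = ⊤ ∨ ∃ r : ℝ, s1 = r := by
        induction s1 using EReal.rec with
        | bot => exact Or.inl rfl
        | top => exact Or.inr (Or.inl rfl)
        | coe r => exact Or.inr (Or.inr ⟨r, rfl⟩)
      rcases h4 with rfl | rfl | ⟨r, rfl⟩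
      · exact ⟨0, fun s _ => ⟨EReal.bot_lt_coe s, EReal.coe_lt_top s⟩⟩
      · exact absurd hlt (lt_irrefl _)
      · exact ⟨r, fun s hs => ⟨EReal.coe_lt_coe_iff.2 hs, EReal.coe_lt_top s⟩⟩
    exact core_top (mk_top (fun s hs => hpos s (ha hs)) (fun s hs => hdz s (ha hs))
      (fun s hs => hdθ s (ha hs)) hz hθ)
  · exfalso
    rw [efr_coe] at hz hθ
    obtain ⟨a, hab, ha⟩ : ∃ a : ℝ, a < B ∧ Ioo a B ⊆ edom s1 B := by
      have h4 : s1 = ⊥ ∨ s1 = ⊤ ∨ ∃ r : ℝ, s1 = r := by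
        induction s1 using EReal.rec with
        | bot => exact Or.inl rfl
        | top => exact Or.inr (Or.inl rfl)
        | coe r => exact Or.inr (Or.inr ⟨r, rfl⟩)
      rcases h4 with rfl | rfl | ⟨r, rfl⟩
      · exact ⟨B - 1, by linarith,
          fun s hs => ⟨EReal.bot_lt_coe s, EReal.coe_lt_coe_iff.2 hs.2⟩⟩
      · exact absurd hlt (not_top_lt)
      · exact ⟨r, EReal.coe_lt_coe_iff.1 hlt,
          fun s hs => ⟨EReal.coe_lt_coe_iff.2 hs.1, EReal.coe_lt_coe_iff.2 hs.2⟩⟩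
    exact core_fin (mk_fin hab (fun s hs => hpos s (ha hs)) (fun s hs => hdz s (ha hs))
      (fun s hs => hdθ s (ha hs)) hz hθ)


end Aux

/-- If a maximal orbit of the phase plane converges to the boundary `z = 0` as `s → s_*` with
`θ → θ_*`, then either `θ_* = 0 (mod 2π)` and `s_* = +∞`, or `θ_* = π (mod 2π)` and
`s_* = -∞`. -/
theorem stmt12 (s1 s2 : EReal) (hlt : s1 < s2) (z θ : ℝ → ℝ)
    (hsol : SysSolOn (edom s1 s2) z θ)
    (hmax : ∀ t1 t2 : EReal, ∀ w φ : ℝ → ℝ, SysSolOn (edom t1 t2) w φ →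
      edom s1 s2 ⊆ edom t1 t2 → Set.EqOn w z (edom s1 s2) → Set.EqOn φ θ (edom s1 s2) →
      edom t1 t2 = edom s1 s2)
    (θstar : ℝ) :
    (Tendsto z (endFilterRight s2) (nhds 0) →
      Tendsto θ (endFilterRight s2) (nhds θstar) →
      s2 = ⊤ ∧ ∃ k : ℤ, θstar = 2 * (k : ℝ) * Real.pi) ∧
    (Tendsto z (endFilterLeft s1) (nhds 0) →
      Tendsto θ (endFilterLeft s1) (nhds θstar) →
      s1 = ⊥ ∧ ∃ k : ℤ, θstar = Real.pi + 2 * (k : ℝ) * Real.pi) := by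
  constructor
  · intro hz2 hθ2
    exact rightCase s1 s2 hlt z θ hsol θstar hz2 hθ2
  · intro hz1 hθ1
    have hlt' : -s2 < -s1 := EReal.neg_lt_neg_iff.2 hlt
    have hmem : ∀ s : ℝ, s ∈ edom (-s2) (-s1) → (-s) ∈ edom s1 s2 := by
      intro s hs
      obtain ⟨h1, h2⟩ := hs
      constructor
      · rw [EReal.coe_neg]
        have := EReal.neg_lt_neg_iff.2 h2
        rwa [neg_neg] at this
      · rw [EReal.coe_neg]
        have := EReal.neg_lt_neg_iff.2 h1
        rwa [neg_neg] at this
    obtain ⟨hpos, hdz, hdθ⟩ := hsol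
    have hneg : ∀ s : ℝ, HasDerivAt (fun t : ℝ => -t) (-1) s := by
      intro s
      exact (hasDerivAt_id' s).neg
    have hsolR : SysSolOn (edom (-s2) (-s1)) (fun s => z (-s)) (fun s => θ (-s) - π) := by
      refine ⟨fun s hs => hpos _ (hmem s hs), ?_, ?_⟩
      · intro s hs
        have h3 := (hdz (-s) (hmem s hs)).comp s (hneg s)
        refine h3.congr_deriv ?_
        rw [Real.sin_sub_pi]
        ring
      · intro s hs
        have h3 := ((hdθ (-s) (hmem s hs)).comp s (hneg s)).sub_const π
        refine h3.congr_deriv ?_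
        simp only [Real.sin_sub_pi, Real.cos_sub_pi]
        field_simp
        ring
    have hzR : Tendsto (fun s => z (-s)) (endFilterRight (-s1)) (nhds 0) := by
      rw [efl_neg, Filter.tendsto_map'_iff] at hz1
      exact hz1
    have hθR : Tendsto (fun s => θ (-s) - π) (endFilterRight (-s1)) (nhds (θstar - π)) := by
      rw [efl_neg, Filter.tendsto_map'_iff] at hθ1
      exact hθ1.sub_const π
    obtain ⟨htop, k, hk⟩ := rightCase (-s2) (-s1) hlt' _ _ hsolR (θstar - π) hzR hθR
    exact ⟨EReal.neg_eq_top_iff.1 htop, ⟨k, by linarith⟩⟩
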